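/- arXiv:1804.09469 — 2 statements merged into one kernel-verified Lean document; each statement's English description precedes it below -/
import Mathlib

section
/- Let i ∈ {1,…,s}, let J be a minimal Q_i-divisor of I with image J̄ in R, and define the affine Hilbert function of J̄ by HF^a_{J̄}(j) = dim_K(J̄ ∩ F_jR) for j ∈ ℤ. Then ri(J̄) := max{ord_F(f) : f ∈ J̄ \ {0}} equals min{j ∈ ℤ : HF^a_{J̄}(j) = ℓ_i}, and HF^a_{J̄}(j) = ℓ_i for all j ≥ ri(J̄). -/
open MvPolynomial

set_option synthInstance.maxHeartbeats 1000000
set_option maxHeartbeats 1000000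

namespace CB

variable (K : Type*) [Field K] {n : ℕ}

/-- The degree filtration `F_iR` on `R = P/I`: the image in `R` of the polynomials
of total degree at most `i` (together with `0`), and `{0}` for `i < 0`. -/
noncomputable def degFil (I : Ideal (MvPolynomial (Fin n) K)) (i : ℤ) :
    Submodule K (MvPolynomial (Fin n) K ⧸ I) :=
  if 0 ≤ i then
    Submodule.map (Ideal.Quotient.mkₐ K I).toLinearMap
      (restrictTotalDegree (Fin n) K i.toNat)
  else ⊥

/-- The affine Hilbert function `HF^a_R(i) = dim_K F_iR`. -/
noncomputable def aHF (I : Ideal (MvPolynomial (Fin n) K)) (i : ℤ) : ℕ :=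
  Module.finrank K (degFil K I i)

/-- The regularity index `ri(R)`: the smallest `i` with `HF^a_R(i) = dim_K R`. -/
noncomputable def ri (I : Ideal (MvPolynomial (Fin n) K)) : ℤ :=
  sInf {i : ℤ | aHF K I i = Module.finrank K (MvPolynomial (Fin n) K ⧸ I)}

/-- The order `ord_F(f)` of an element of `R`. -/
noncomputable def ordF (I : Ideal (MvPolynomial (Fin n) K))
    (f : MvPolynomial (Fin n) K ⧸ I) : ℤ :=
  sInf {i : ℤ | f ∈ degFil K I i}

/-- The action of `R` on the canonical module `ω_R = Hom_K(R,K)`: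
`(f · φ)(g) = φ(f * g)`. -/
noncomputable def dAct (I : Ideal (MvPolynomial (Fin n) K))
    (f : MvPolynomial (Fin n) K ⧸ I)
    (φ : Module.Dual K (MvPolynomial (Fin n) K ⧸ I)) :
    Module.Dual K (MvPolynomial (Fin n) K ⧸ I) :=
  φ.comp (LinearMap.mulLeft K f)

/-- The degree filtration `G_iω_R = {φ : φ(F_{-i-1}R) = 0}` on the canonical module. -/
noncomputable def Gfil (I : Ideal (MvPolynomial (Fin n) K)) (i : ℤ) :
    Submodule K (Module.Dual K (MvPolynomial (Fin n) K ⧸ I)) :=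
  Submodule.dualAnnihilator (degFil K I (-i - 1))

/-- The order `ord_G(φ)` of an element of `ω_R`. -/
noncomputable def ordG (I : Ideal (MvPolynomial (Fin n) K))
    (φ : Module.Dual K (MvPolynomial (Fin n) K ⧸ I)) : ℤ :=
  sInf {i : ℤ | φ ∈ Gfil K I i}

/-- `Q : Fin s → Ideal P` is the (minimal) primary decomposition of `I`. -/
def IsPrimaryDecomp (I : Ideal (MvPolynomial (Fin n) K)) {s : ℕ}
    (Q : Fin s → Ideal (MvPolynomial (Fin n) K)) : Prop :=
  (∀ i, (Q i).IsPrimary) ∧ I = ⨅ i, Q i ∧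
    Function.Injective fun i => (Q i).radical

/-- The image `q_j` of the primary component `Q_j` in `R`. -/
noncomputable def qR (I : Ideal (MvPolynomial (Fin n) K)) {s : ℕ}
    (Q : Fin s → Ideal (MvPolynomial (Fin n) K)) (j : Fin s) :
    Ideal (MvPolynomial (Fin n) K ⧸ I) :=
  (Q j).map (Ideal.Quotient.mk I)

/-- The image `m_j` of the maximal component `M_j = Rad(Q_j)` in `R`. -/
noncomputable def mR (I : Ideal (MvPolynomial (Fin n) K)) {s : ℕ}
    (Q : Fin s → Ideal (MvPolynomial (Fin n) K)) (j : Fin s) :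
    Ideal (MvPolynomial (Fin n) K ⧸ I) :=
  ((Q j).radical).map (Ideal.Quotient.mk I)

/-- `ℓ_i = dim_K (P / M_i)`. -/
noncomputable def ell {s : ℕ} (Q : Fin s → Ideal (MvPolynomial (Fin n) K)) (i : Fin s) : ℕ :=
  Module.finrank K (MvPolynomial (Fin n) K ⧸ (Q i).radical)

/-- `f ∈ R` is a separator for `m_i`: `dim_K⟨f⟩ = dim_K(R/m_i)` and `f ∈ q_j` for `j ≠ i`. -/
def IsSeparator (I : Ideal (MvPolynomial (Fin n) K)) {s : ℕ}
    (Q : Fin s → Ideal (MvPolynomial (Fin n) K)) (i : Fin s)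
    (f : MvPolynomial (Fin n) K ⧸ I) : Prop :=
  Module.finrank K ((Ideal.span {f}).restrictScalars K)
      = Module.finrank K ((MvPolynomial (Fin n) K ⧸ I) ⧸ mR K I Q i) ∧
    ∀ j, j ≠ i → f ∈ qR K I Q j

/-- `J` is a `Q_i`-divisor of `I`. -/
def IsQiDivisor (I : Ideal (MvPolynomial (Fin n) K)) {s : ℕ}
    (Q : Fin s → Ideal (MvPolynomial (Fin n) K)) (i : Fin s)
    (J : Ideal (MvPolynomial (Fin n) K)) : Prop :=
  ∃ Q' : Ideal (MvPolynomial (Fin n) K),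
    Q i < Q' ∧ Q' ≤ (Q i).radical ∧ J = ⨅ j, if j = i then Q' else Q j

/-- The image `J̄` of an ideal `J ⊇ I` in `R`, as a `K`-vector subspace; its dimension
is `dim_K (J/I)`. -/
noncomputable def resIm (I J : Ideal (MvPolynomial (Fin n) K)) :
    Submodule K (MvPolynomial (Fin n) K ⧸ I) :=
  (J.map (Ideal.Quotient.mk I)).restrictScalars K

/-- `J` is a minimal `Q_i`-divisor of `I`: a `Q_i`-divisor with `dim_K(J/I) = ℓ_i`. -/
def IsMinQiDivisor (I : Ideal (MvPolynomial (Fin n) K)) {s : ℕ}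
    (Q : Fin s → Ideal (MvPolynomial (Fin n) K)) (i : Fin s)
    (J : Ideal (MvPolynomial (Fin n) K)) : Prop :=
  IsQiDivisor K I Q i J ∧ Module.finrank K (resIm K I J) = ell K Q i

/-- `ri(J̄) = max { ord_F(f) : f ∈ J̄ \ {0} }`. -/
noncomputable def riBar (I J : Ideal (MvPolynomial (Fin n) K)) : ℤ :=
  sSup {d : ℤ | ∃ f ∈ resIm K I J, f ≠ 0 ∧ ordF K I f = d}

/-- The separator degree `sepdeg(m_i) = min { ri(J̄) : J a minimal Q_i-divisor of I }`. -/
noncomputable def sepdeg (I : Ideal (MvPolynomial (Fin n) K)) {s : ℕ}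
    (Q : Fin s → Ideal (MvPolynomial (Fin n) K)) (i : Fin s) : ℤ :=
  sInf {d : ℤ | ∃ J, IsMinQiDivisor K I Q i J ∧ riBar K I J = d}

/-- `R = P/I` has the Cayley–Bacharach property: `sepdeg(m_i) = ri(R)` for all maximal
ideals `m_i`, where the `m_i` come from the primary decomposition of `I`. -/
def hasCBP (I : Ideal (MvPolynomial (Fin n) K)) : Prop :=
  ∀ (s : ℕ) (Q : Fin s → Ideal (MvPolynomial (Fin n) K)),
    IsPrimaryDecomp K I Q → ∀ i, sepdeg K I Q i = ri K I

/-- The socle of a ring `A` with respect to an ideal `m`: `Ann_A(m)`. -/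
noncomputable def socle (A : Type*) [CommRing A] (m : Ideal A) : Ideal A :=
  Submodule.colon ⊥ (m : Set A)

theorem socle_isTorsionBySet (A : Type*) [CommRing A] (m : Ideal A) :
    Module.IsTorsionBySet A (socle A m) m := by
  intro x a
  have h : (x : A) • (a : A) ∈ (⊥ : Ideal A) :=
    Submodule.mem_colon.mp x.2 (a : A) a.2
  apply Subtype.ext
  have : (a : A) * (x : A) = 0 := by
    simpa [smul_eq_mul, mul_comm] using h
  simpa [smul_eq_mul] using this

/-- The socle, viewed as a vector space over the residue field `A/m`. -/
noncomputable def socleModule (A : Type*) [CommRing A] (m : Ideal A) :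
    Module (A ⧸ m) (socle A m) :=
  (socle_isTorsionBySet A m).module

/-- The socle of `A` at `m` is one-dimensional over the residue field `A/m`. -/
def SocleOneDim (A : Type*) [CommRing A] (m : Ideal A) : Prop :=
  @Module.finrank (A ⧸ m) (socle A m) _ _ (socleModule A m) = 1

/-- `R = P/I` is locally Gorenstein: every local factor `R/q_i` is a Gorenstein local
ring, i.e. its socle is one-dimensional over the residue field. -/
def IsLocallyGorenstein (I : Ideal (MvPolynomial (Fin n) K)) : Prop :=
  ∀ (s : ℕ) (Q : Fin s → Ideal (MvPolynomial (Fin n) K)), IsPrimaryDecomp K I Q →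
    ∀ i, SocleOneDim ((MvPolynomial (Fin n) K ⧸ I) ⧸ qR K I Q i)
      ((mR K I Q i).map (Ideal.Quotient.mk (qR K I Q i)))

/-- The degree form ideal `DF(I)`, generated by the degree forms (top degree homogeneous
components) of the nonzero elements of `I`; one has `gr_F(R) ≅ P/DF(I)`. -/
noncomputable def DF (I : Ideal (MvPolynomial (Fin n) K)) :
    Ideal (MvPolynomial (Fin n) K) :=
  Ideal.span {g | ∃ f ∈ I, f ≠ (0 : MvPolynomial (Fin n) K) ∧
    g = homogeneousComponent f.totalDegree f}

/-- The maximal ideal of the graded local ring `gr_F(R) ≅ P/DF(I)`: the image of the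
irrelevant ideal `⟨x_1,…,x_n⟩`. -/
noncomputable def grMaxIdeal (I : Ideal (MvPolynomial (Fin n) K)) :
    Ideal (MvPolynomial (Fin n) K ⧸ DF K I) :=
  (Ideal.span (Set.range (X : Fin n → MvPolynomial (Fin n) K))).map
    (Ideal.Quotient.mk (DF K I))

/-- `R` is a strict Gorenstein ring: the socle of `gr_F(R) ≅ P/DF(I)` is one-dimensional
over `K`. -/
def IsStrictGorenstein (I : Ideal (MvPolynomial (Fin n) K)) : Prop :=
  Module.finrank K
    ((socle (MvPolynomial (Fin n) K ⧸ DF K I) (grMaxIdeal K I)).restrictScalars K) = 1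

/-- The extension ideal `I·L[x_1,…,x_n]`, so that `R ⊗_K L = L[x_1,…,x_n]/I·L[x_1,…,x_n]`. -/
noncomputable def extIdeal (L : Type*) [Field L] [Algebra K L]
    (I : Ideal (MvPolynomial (Fin n) K)) : Ideal (MvPolynomial (Fin n) L) :=
  I.map (MvPolynomial.map (algebraMap K L))

/-- The affine Hilbert function of `R` is symmetric:
`ΔHF^a_R(ri(R)−i) = ΔHF^a_R(i)` for all `i ∈ ℤ`. -/
def SymmetricHF (I : Ideal (MvPolynomial (Fin n) K)) : Prop :=
  ∀ i : ℤ, (aHF K I (ri K I - i) : ℤ) - aHF K I (ri K I - i - 1)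
    = (aHF K I i : ℤ) - aHF K I (i - 1)

/-- `Ann_R(φ) = {0}` for `φ ∈ ω_R`. -/
def AnnZero (I : Ideal (MvPolynomial (Fin n) K))
    (φ : Module.Dual K (MvPolynomial (Fin n) K ⧸ I)) : Prop :=
  ∀ f : MvPolynomial (Fin n) K ⧸ I, dAct K I f φ = 0 → f = 0

/-- `φ` generates `ω_R` as an `R`-module: `ω_R = ⟨φ⟩`. -/
def GeneratesDual (I : Ideal (MvPolynomial (Fin n) K))
    (φ : Module.Dual K (MvPolynomial (Fin n) K ⧸ I)) : Prop :=
  ∀ ψ : Module.Dual K (MvPolynomial (Fin n) K ⧸ I),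
    ∃ f : MvPolynomial (Fin n) K ⧸ I, ψ = dAct K I f φ

/-- The `i`-th socle space `S_i ⊆ R`: the preimage under the decomposition
`R ≅ R/q_1 × … × R/q_s` of `{0} × … × Soc(R/q_i) × … × {0}`. -/
noncomputable def socSpace (I : Ideal (MvPolynomial (Fin n) K)) {s : ℕ}
    (Q : Fin s → Ideal (MvPolynomial (Fin n) K)) (i : Fin s) :
    Ideal (MvPolynomial (Fin n) K ⧸ I) :=
  ((socle ((MvPolynomial (Fin n) K ⧸ I) ⧸ qR K I Q i)
        ((mR K I Q i).map (Ideal.Quotient.mk (qR K I Q i)))).comap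
      (Ideal.Quotient.mk (qR K I Q i))) ⊓
    ⨅ j ≠ i, qR K I Q j

end CB

universe u

namespace CB

variable {K : Type u} [Field K] {n : ℕ}

lemma degFil_mono (I : Ideal (MvPolynomial (Fin n) K)) : Monotone (degFil K I) := by
  intro a b hab
  unfold degFil
  by_cases ha : 0 ≤ a
  · rw [if_pos ha, if_pos (ha.trans hab)]
    apply Submodule.map_mono
    intro p hp
    rw [mem_restrictTotalDegree] at hp ⊢
    exact hp.trans (by omega)
  · rw [if_neg ha]; exact bot_le

lemma degFil_neg (I : Ideal (MvPolynomial (Fin n) K)) {i : ℤ} (hi : i < 0) :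
    degFil K I i = ⊥ := if_neg (not_le.mpr hi)

lemma exists_mem_degFil (I : Ideal (MvPolynomial (Fin n) K))
    (x : MvPolynomial (Fin n) K ⧸ I) : ∃ N : ℕ, x ∈ degFil K I (N : ℤ) := by
  obtain ⟨p, rfl⟩ := Ideal.Quotient.mk_surjective x
  refine ⟨p.totalDegree, ?_⟩
  rw [degFil, if_pos (by positivity)]
  exact ⟨p, (mem_restrictTotalDegree _ _ _).mpr (by simp), rfl⟩

lemma exists_degFil_top (I : Ideal (MvPolynomial (Fin n) K))
    [FiniteDimensional K (MvPolynomial (Fin n) K ⧸ I)] :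
    ∃ N : ℤ, degFil K I N = ⊤ := by
  choose g hg using exists_mem_degFil (K := K) I
  obtain ⟨T, hT⟩ := Module.finite_def.mp
    (inferInstance : Module.Finite K (MvPolynomial (Fin n) K ⧸ I))
  refine ⟨(T.sup g : ℕ), le_antisymm le_top ?_⟩
  rw [← hT, Submodule.span_le]
  intro t ht
  exact degFil_mono I (by exact_mod_cast Nat.cast_le.mpr (Finset.le_sup ht)) (hg t)

lemma ordF_spec (I : Ideal (MvPolynomial (Fin n) K))
    {f : MvPolynomial (Fin n) K ⧸ I} (hf : f ≠ 0) :
    f ∈ degFil K I (ordF K I f) ∧ ∀ j, f ∈ degFil K I j → ordF K I f ≤ j := by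
  have hbdd : BddBelow {i : ℤ | f ∈ degFil K I i} := by
    refine ⟨0, fun j hj => ?_⟩
    by_contra h
    rw [Set.mem_setOf_eq, degFil_neg I (by omega)] at hj
    exact hf hj
  obtain ⟨N, hN⟩ := exists_mem_degFil I f
  have hne : {i : ℤ | f ∈ degFil K I i}.Nonempty := ⟨N, hN⟩
  exact ⟨Int.csInf_mem hne hbdd, fun j hj => csInf_le hbdd hj⟩

lemma factorₗ_aux (I J : Ideal (MvPolynomial (Fin n) K)) (h : I ≤ J) :
    ∃ g : (MvPolynomial (Fin n) K ⧸ I) →ₗ[K] (MvPolynomial (Fin n) K ⧸ J),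
      Function.Surjective g := by
  refine ⟨{ toFun := Ideal.Quotient.factor h,
            map_add' := fun x y => map_add _ x y,
            map_smul' := fun k x => ?_ }, fun y => ?_⟩
  · obtain ⟨p, rfl⟩ := Ideal.Quotient.mk_surjective x
    have h1 : k • Ideal.Quotient.mk I p = Ideal.Quotient.mk I (k • p) :=
      (map_smul (Ideal.Quotient.mkₐ K I) k p).symm
    have h2 : k • Ideal.Quotient.mk J p = Ideal.Quotient.mk J (k • p) :=
      (map_smul (Ideal.Quotient.mkₐ K J) k p).symm
    simp [h1, Ideal.Quotient.factor_mk, h2]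
  · obtain ⟨p, rfl⟩ := Ideal.Quotient.mk_surjective y
    exact ⟨Ideal.Quotient.mk I p, Ideal.Quotient.factor_mk h p⟩

theorem stmt_3 {s : ℕ} (I : Ideal (MvPolynomial (Fin n) K))
    [FiniteDimensional K (MvPolynomial (Fin n) K ⧸ I)]
    (Q : Fin s → Ideal (MvPolynomial (Fin n) K)) (hQ : IsPrimaryDecomp K I Q)
    (i : Fin s) (J : Ideal (MvPolynomial (Fin n) K))
    (hJ : IsMinQiDivisor K I Q i J) :
    riBar K I J =
      sInf {j : ℤ | Module.finrank K ↥(resIm K I J ⊓ degFil K I j) = ell K Q i} ∧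
    ∀ j : ℤ, riBar K I J ≤ j →
      Module.finrank K ↥(resIm K I J ⊓ degFil K I j) = ell K Q i := by
  set S := resIm K I J with hSdef
  have hdim : Module.finrank K S = ell K Q i := hJ.2
  -- ell > 0
  have hrad_ne_top : (Q i).radical ≠ ⊤ := fun h =>
    (hQ.1 i).1 (Ideal.radical_eq_top.mp h)
  have hIle : I ≤ (Q i).radical := by
    rw [hQ.2.1]
    exact le_trans (iInf_le _ i) Ideal.le_radical
  have hfd : FiniteDimensional K (MvPolynomial (Fin n) K ⧸ (Q i).radical) := by
    obtain ⟨g, hg⟩ := factorₗ_aux I (Q i).radical hIle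
    exact Module.Finite.of_surjective g hg
  have hellpos : 0 < ell K Q i := by
    have : Nontrivial (MvPolynomial (Fin n) K ⧸ (Q i).radical) :=
      Ideal.Quotient.nontrivial_iff.mpr hrad_ne_top
    exact Module.finrank_pos
  have hSne : S ≠ ⊥ := by
    intro h
    rw [h, finrank_bot] at hdim
    omega
  obtain ⟨N, hNtop⟩ := exists_degFil_top I
  -- the set of orders
  set Ord := {d : ℤ | ∃ f ∈ S, f ≠ 0 ∧ ordF K I f = d} with hOrddef
  have hOrdne : Ord.Nonempty := by
    obtain ⟨f, hfS, hfne⟩ := Submodule.exists_mem_ne_zero_of_ne_bot hSne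
    exact ⟨ordF K I f, f, hfS, hfne, rfl⟩
  have hOrdbdd : BddAbove Ord := by
    refine ⟨N, fun d hd => ?_⟩
    obtain ⟨f, hfS, hfne, rfl⟩ := hd
    exact (ordF_spec I hfne).2 N (hNtop ▸ Submodule.mem_top)
  have hrmem : riBar K I J ∈ Ord := Int.csSup_mem hOrdne hOrdbdd
  obtain ⟨f₀, hf₀S, hf₀ne, hf₀ord⟩ := hrmem
  -- part 2
  have part2 : ∀ j : ℤ, riBar K I J ≤ j →
      Module.finrank K ↥(resIm K I J ⊓ degFil K I j) = ell K Q i := by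
    intro j hj
    have hle : S ≤ degFil K I j := by
      intro f hf
      by_cases hfz : f = 0
      · simp [hfz]
      · have hmem : ordF K I f ∈ Ord := ⟨f, hf, hfz, rfl⟩
        have h1 : ordF K I f ≤ j := (le_csSup hOrdbdd hmem).trans hj
        exact degFil_mono I h1 ((ordF_spec I hfz).1)
    rw [show resIm K I J ⊓ degFil K I j = S from inf_eq_left.mpr hle]
    exact hdim
  refine ⟨?_, part2⟩
  -- part 1
  have hmemT : riBar K I J ∈
      {j : ℤ | Module.finrank K ↥(resIm K I J ⊓ degFil K I j) = ell K Q i} :=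
    part2 _ le_rfl
  have hlb : ∀ j ∈ {j : ℤ | Module.finrank K ↥(resIm K I J ⊓ degFil K I j)
      = ell K Q i}, riBar K I J ≤ j := by
    intro j hj
    have heq : S ⊓ degFil K I j = S := by
      apply Submodule.eq_of_le_of_finrank_le inf_le_left
      rw [hdim, hj]
    have hle : S ≤ degFil K I j := by rw [← heq]; exact inf_le_right
    rw [← hf₀ord]
    exact (ordF_spec I hf₀ne).2 j (hle hf₀S)
  exact le_antisymm (le_csInf ⟨_, hmemT⟩ hlb) (csInf_le ⟨_, hlb⟩ hmemT)

end CB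
end

section
/- If there exists an element φ ∈ G_{−ri(R)}ω_R with Ann_R(φ) = {0}, then HF^a_R(i) + HF^a_R(ri(R)−1−i) ≤ dim_K(R) for i = 0,…,ri(R)−1. -/
open MvPolynomial

set_option synthInstance.maxHeartbeats 1000000
set_option maxHeartbeats 1000000

universe u

namespace CB

variable {K : Type u} [Field K] {n : ℕ}


lemma mul_mem_degFil (I : Ideal (MvPolynomial (Fin n) K)) {a b : ℤ} (ha : 0 ≤ a)
    (hb : 0 ≤ b) {f g : MvPolynomial (Fin n) K ⧸ I} (hf : f ∈ degFil K I a)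
    (hg : g ∈ degFil K I b) : f * g ∈ degFil K I (a + b) := by
  simp only [degFil, if_pos ha, if_pos hb, if_pos (add_nonneg ha hb)] at *
  obtain ⟨p, hp, rfl⟩ := hf
  obtain ⟨q, hq, rfl⟩ := hg
  refine ⟨p * q, ?_, by simp⟩
  simp only [SetLike.mem_coe, mem_restrictTotalDegree] at *
  calc (p * q).totalDegree ≤ p.totalDegree + q.totalDegree := totalDegree_mul p q
    _ ≤ a.toNat + b.toNat := add_le_add hp hq
    _ = (a + b).toNat := (Int.toNat_add ha hb).symm

theorem stmt_13 (I : Ideal (MvPolynomial (Fin n) K))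
    [FiniteDimensional K (MvPolynomial (Fin n) K ⧸ I)]
    (h : ∃ φ ∈ Gfil K I (-(ri K I)), AnnZero K I φ) :
    ∀ i : ℤ, 0 ≤ i → i ≤ ri K I - 1 →
      (aHF K I i : ℤ) + aHF K I (ri K I - 1 - i)
        ≤ (Module.finrank K (MvPolynomial (Fin n) K ⧸ I) : ℤ) := by
  obtain ⟨φ, hφG, hφAnn⟩ := h
  intro i hi0 hir
  set R := MvPolynomial (Fin n) K ⧸ I with hR
  let L : R →ₗ[K] Module.Dual K R :=
    (LinearMap.llcomp K R R K φ).comp (LinearMap.mul K R)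
  have hLapp : ∀ f g : R, L f g = φ (f * g) := fun f g => rfl
  have hLdAct : ∀ f : R, L f = dAct K I f φ := fun f => rfl
  have hLinj : Function.Injective L := by
    rw [← LinearMap.ker_eq_bot]
    ext f
    simp only [LinearMap.mem_ker, Submodule.mem_bot]
    constructor
    · intro hf
      exact hφAnn f (by rw [← hLdAct]; exact hf)
    · rintro rfl; simp
  have hφ' : φ ∈ (degFil K I (ri K I - 1)).dualAnnihilator := by
    have heq : -(-(ri K I)) - 1 = ri K I - 1 := by ring
    simpa only [Gfil, heq] using hφG
  have hmap : Submodule.map L (degFil K I i)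
      ≤ (degFil K I (ri K I - 1 - i)).dualAnnihilator := by
    rintro _ ⟨f, hf, rfl⟩
    rw [Submodule.mem_dualAnnihilator]
    intro g hg
    have hfg : f * g ∈ degFil K I (ri K I - 1) := by
      have := mul_mem_degFil I hi0 (by omega : (0:ℤ) ≤ ri K I - 1 - i) hf hg
      rwa [show i + (ri K I - 1 - i) = ri K I - 1 by ring] at this
    rw [hLapp]
    exact (Submodule.mem_dualAnnihilator φ).mp hφ' _ hfg
  have h1 : Module.finrank K (degFil K I i)
      ≤ Module.finrank K ((degFil K I (ri K I - 1 - i)).dualAnnihilator) := by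
    calc Module.finrank K (degFil K I i)
        = Module.finrank K (Submodule.map L (degFil K I i)) :=
          (Submodule.equivMapOfInjective L hLinj (degFil K I i)).finrank_eq
      _ ≤ _ := Submodule.finrank_mono hmap
  have h2 : Module.finrank K ((degFil K I (ri K I - 1 - i)).dualAnnihilator)
      + Module.finrank K (degFil K I (ri K I - 1 - i)) = Module.finrank K (MvPolynomial (Fin n) K ⧸ I) := by
    rw [(Subspace.quotEquivAnnihilator (degFil K I (ri K I - 1 - i))).symm.finrank_eq]
    exact Submodule.finrank_quotient_add_finrank _
  unfold aHF
  omega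

end CB
end
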